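/- All elements of a non-dominated set are equivalent with respect to comparison with (0, 0): if S ⊆ ℤ × ℤ is a non-dominated set, x, y ∈ S, and x ≻_re (0, 0), then y ≻_re (0, 0); similarly, if x ≺_re (0, 0) then y ≺_re (0, 0), and if x =_re (0, 0) then y =_re (0, 0). -/

import Mathlib

/-- Sign sum of a pair of integers: sign(x_r) + sign(x_p). -/
def signsum (x : ℤ × ℤ) : ℤ := x.1.sign + x.2.sign

/-- Pareto dominance: x ≻ y iff x_r ≥ y_r, x_p ≥ y_p, and x ≠ y. -/
def paretoDom (x y : ℤ × ℤ) : Prop := y.1 ≤ x.1 ∧ y.2 ≤ x.2 ∧ x ≠ y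

/-- Resilience dominance: x ≻_re y iff (signsum x = signsum y and x ≻ y)
or signsum x > signsum y. -/
def reDom (x y : ℤ × ℤ) : Prop :=
  (signsum x = signsum y ∧ paretoDom x y) ∨ signsum y < signsum x

/-- Mutual non-domination: x =_re y iff neither x ≻_re y nor y ≻_re x. -/
def reEq (x y : ℤ × ℤ) : Prop := ¬ reDom x y ∧ ¬ reDom y x

lemma int_sign_nonpos {a : ℤ} (h : a ≤ 0) : a.sign ≤ 0 := by
  have h1 : (0:ℤ) ≤ (-a).sign := Int.sign_nonneg_iff.mpr (by omega)
  rw [Int.sign_neg] at h1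
  omega

lemma signsum_zero : signsum (0, 0) = 0 := by simp [signsum]

lemma redom_zero_iff (x : ℤ × ℤ) : reDom x (0, 0) ↔ 0 < signsum x := by
  constructor
  · rintro (⟨h1, h2, h3, h4⟩ | h)
    · exfalso
      rw [signsum_zero] at h1
      have s1 : 0 ≤ x.1.sign := Int.sign_nonneg_iff.mpr h2
      have s2 : 0 ≤ x.2.sign := Int.sign_nonneg_iff.mpr h3
      have e1 : x.1.sign = 0 := by unfold signsum at h1; omega
      have e2 : x.2.sign = 0 := by unfold signsum at h1; omega
      exact h4 (Prod.ext (Int.sign_eq_zero_iff_zero.mp e1)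
        (Int.sign_eq_zero_iff_zero.mp e2))
    · rwa [signsum_zero] at h
  · intro h; right; rwa [signsum_zero]

lemma zero_redom_iff (x : ℤ × ℤ) : reDom (0, 0) x ↔ signsum x < 0 := by
  constructor
  · rintro (⟨h1, h2, h3, h4⟩ | h)
    · exfalso
      rw [signsum_zero] at h1
      have s1 : x.1.sign ≤ 0 := int_sign_nonpos h2
      have s2 : x.2.sign ≤ 0 := int_sign_nonpos h3
      have e1 : x.1.sign = 0 := by unfold signsum at h1; omega
      have e2 : x.2.sign = 0 := by unfold signsum at h1; omega
      exact h4 (Prod.ext (Int.sign_eq_zero_iff_zero.mp e1)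
        (Int.sign_eq_zero_iff_zero.mp e2)).symm
    · rwa [signsum_zero] at h
  · intro h; right; rwa [signsum_zero]

/-- All elements of a non-dominated set are equivalent w.r.t. comparison
with (0,0). -/
theorem nondominated_zero_comparison (S : Set (ℤ × ℤ))
    (hS : ∀ x ∈ S, ∀ y ∈ S, reEq x y) (x y : ℤ × ℤ) (hx : x ∈ S) (hy : y ∈ S) :
    (reDom x (0, 0) → reDom y (0, 0)) ∧
    (reDom (0, 0) x → reDom (0, 0) y) ∧
    (reEq x (0, 0) → reEq y (0, 0)) := by
  have hxy := hS x hx y hy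
  have hss : signsum x = signsum y := by
    by_contra h
    rcases lt_or_gt_of_ne h with hlt | hgt
    · exact hxy.2 (Or.inr hlt)
    · exact hxy.1 (Or.inr hgt)
  refine ⟨?_, ?_, ?_⟩
  · intro h; rw [redom_zero_iff] at *; omega
  · intro h; rw [zero_redom_iff] at *; omega
  · rintro ⟨h1, h2⟩
    rw [redom_zero_iff] at h1
    rw [zero_redom_iff] at h2
    exact ⟨by rw [redom_zero_iff]; omega, by rw [zero_redom_iff]; omega⟩
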